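/- Let u, v ∈ ℂⁿ (n ≥ 2), where v has pairwise distinct coordinates, and let 1 ≤ p ≤ ∞. Then for all indices i ≠ j, |uᵢ - vⱼ| ≥ (1 - ‖(u - v)/d(v)‖_p) |vᵢ - vⱼ|, where d(v)ᵢ = min_{j ≠ i} |vᵢ - vⱼ| and (u-v)/d(v) denotes the vector with coordinates |uᵢ - vᵢ|/dᵢ(v). -/

import Mathlib

open scoped ENNReal

noncomputable def pnorm (p : ℝ≥0∞) {n : ℕ} (w : Fin n → ℝ) : ℝ :=
  ‖(WithLp.equiv p (Fin n → ℝ)).symm w‖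

noncomputable def dmin {n : ℕ} (v : Fin n → ℂ) (i : Fin n) : ℝ :=
  ⨅ j : {j : Fin n // j ≠ i}, ‖v i - v j.1‖

lemma coord_le_pnorm (p : ℝ≥0∞) (hp : 1 ≤ p) {n : ℕ} (w : Fin n → ℝ) (i : Fin n) :
    |w i| ≤ pnorm p w := by
  unfold pnorm
  by_cases hptop : p = ⊤
  · subst hptop
    have h := PiLp.norm_eq_ciSup ((WithLp.equiv ⊤ (Fin n → ℝ)).symm w)
    rw [h]
    exact le_ciSup (f := fun k => ‖((WithLp.equiv ⊤ (Fin n → ℝ)).symm w) k‖)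
      (Set.Finite.bddAbove (Set.finite_range _)) i
  · have hq : 0 < p.toReal := ENNReal.toReal_pos (by positivity) hptop
    have hq1 : 1 ≤ p.toReal := by
      rw [← ENNReal.toReal_one]
      exact ENNReal.toReal_mono hptop hp
    rw [PiLp.norm_eq_sum hq]
    have h1 : |w i| ^ p.toReal ≤ ∑ k, ‖((WithLp.equiv p (Fin n → ℝ)).symm w) k‖ ^ p.toReal := by
      have := Finset.single_le_sum (f := fun k => ‖((WithLp.equiv p (Fin n → ℝ)).symm w) k‖ ^ p.toReal)
        (fun k _ => by positivity) (Finset.mem_univ i)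
      simpa [Real.norm_eq_abs] using this
    calc |w i| = (|w i| ^ p.toReal) ^ (1 / p.toReal) := by
          rw [← Real.rpow_mul (abs_nonneg _), mul_one_div_cancel hq.ne', Real.rpow_one]
      _ ≤ _ := Real.rpow_le_rpow (by positivity) h1 (by positivity)

lemma dmin_pos {n : ℕ} (hn : 2 ≤ n) (v : Fin n → ℂ) (hv : Function.Injective v) (i : Fin n) :
    0 < dmin v i := by
  have : Nontrivial (Fin n) := Fin.nontrivial_iff_two_le.mpr hn
  have : Nonempty {j : Fin n // j ≠ i} := by
    obtain ⟨j, hj⟩ := exists_ne i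
    exact ⟨⟨j, hj⟩⟩
  obtain ⟨j₀, hj₀⟩ := Finite.exists_min (fun j : {j : Fin n // j ≠ i} => ‖v i - v j.1‖)
  have h1 : dmin v i = ‖v i - v j₀.1‖ :=
    le_antisymm (ciInf_le (Set.Finite.bddBelow (Set.finite_range _)) j₀) (le_ciInf hj₀)
  rw [h1]
  rw [norm_pos_iff]
  exact sub_ne_zero.mpr (fun h => j₀.2 (hv h.symm))

lemma dmin_le {n : ℕ} (v : Fin n → ℂ) {i j : Fin n} (h : j ≠ i) :
    dmin v i ≤ ‖v i - v j‖ := by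
  have := ciInf_le (f := fun j : {j : Fin n // j ≠ i} => ‖v i - v j.1‖)
    (Set.Finite.bddBelow (Set.finite_range _)) ⟨j, h⟩
  exact this

theorem u_v_inequality_basic_1 (n : ℕ) (hn : 2 ≤ n) (u v : Fin n → ℂ)
    (hv : Function.Injective v) (p : ℝ≥0∞) (hp : 1 ≤ p) :
    ∀ i j : Fin n, i ≠ j →
      (1 - pnorm p (fun k => ‖u k - v k‖ / dmin v k)) * ‖v i - v j‖
        ≤ ‖u i - v j‖ := by
  intro i j hij
  set w : Fin n → ℝ := fun k => ‖u k - v k‖ / dmin v k with hw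
  have hdi : 0 < dmin v i := dmin_pos hn v hv i
  have hwi : 0 ≤ w i := div_nonneg (norm_nonneg _) hdi.le
  have hwle : w i ≤ pnorm p w := by
    have := coord_le_pnorm p hp w i
    rwa [abs_of_nonneg hwi] at this
  have hdle : dmin v i ≤ ‖v i - v j‖ := dmin_le v (Ne.symm hij)
  have key : w i * dmin v i = ‖u i - v i‖ := div_mul_cancel₀ _ hdi.ne'
  have tri : ‖v i - v j‖ - ‖u i - v i‖ ≤ ‖u i - v j‖ := by
    have h1 := norm_sub_le_norm_sub_add_norm_sub (v i) (u i) (v j)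
    have h2 : ‖v i - u i‖ = ‖u i - v i‖ := norm_sub_rev _ _
    linarith
  calc (1 - pnorm p w) * ‖v i - v j‖
      ≤ (1 - w i) * ‖v i - v j‖ := by
        apply mul_le_mul_of_nonneg_right _ (norm_nonneg _)
        linarith
    _ = ‖v i - v j‖ - w i * ‖v i - v j‖ := by ring
    _ ≤ ‖v i - v j‖ - w i * dmin v i := by nlinarith
    _ = ‖v i - v j‖ - ‖u i - v i‖ := by rw [key]
    _ ≤ ‖u i - v j‖ := tri
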